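/- For integers 0 ≤ a ≤ b ≤ n with b − a < n, and 0 ≤ M < N, the difference of interval probabilities satisfies (N − M)·(P_{M+1}([a,b]) − P_M([a,b])) = (n − (a−1))·P_M(a−1) − (n − b)·P_M(b), where P_M([a,b]) = Σ_{x=a}^{b} P_M(x) and P_M(a−1) is interpreted as 0 when a = 0. -/
import Mathlib

def hyperPMF (M n N x : ℕ) : ℚ :=
  if x ≤ n then (M.choose x * (N - M).choose (n - x) : ℚ) / (N.choose n) else 0

lemma factB (m k : ℕ) : ((k : ℚ) + 1) * (m.choose (k+1)) = ((m : ℚ) - k) * m.choose k := by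
  rcases le_or_gt k m with h | h
  · have := Nat.choose_succ_right_eq m k
    have hc : ((m.choose (k+1) * (k+1) : ℕ) : ℚ) = ((m.choose k * (m - k) : ℕ) : ℚ) := by
      exact_mod_cast congrArg (Nat.cast : ℕ → ℚ) this
    push_cast [Nat.cast_sub h] at hc
    linarith
  · rw [Nat.choose_eq_zero_of_lt h, Nat.choose_eq_zero_of_lt (by omega)]
    ring

lemma factA (m k : ℕ) : (m : ℚ) * ((m-1).choose k) = ((m : ℚ) - k) * m.choose k := by
  cases m with
  | zero =>
      cases k with
      | zero => simp
      | succ k => simp [Nat.choose_eq_zero_of_lt (Nat.succ_pos k)]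
  | succ m' =>
      have h := Nat.add_one_mul_choose_eq m' k
      have hc : (((m'+1) * m'.choose k : ℕ) : ℚ) = (((m'+1).choose (k+1) * (k+1) : ℕ) : ℚ) := by
        exact_mod_cast congrArg (Nat.cast : ℕ → ℚ) h
      push_cast at hc
      have hB := factB (m'+1) k
      push_cast at hB
      simp only [Nat.succ_sub_one]
      push_cast
      linarith

lemma tele (g : ℕ → ℚ) (a b : ℕ) (h : a ≤ b) :
    ∑ x ∈ Finset.Icc a b, (g x - g (x+1)) = g a - g (b+1) := by
  induction b, h using Nat.le_induction with
  | base => simp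
  | succ b hab ih =>
      rw [Finset.sum_Icc_succ_top (by omega), ih]
      ring

lemma key (n N M : ℕ) (hnN : n ≤ N) (hMN : M < N) (x : ℕ) (hx : x ≤ n) :
    ((N : ℚ) - M) * (hyperPMF (M+1) n N x - hyperPMF M n N x)
      = (if x = 0 then 0 else ((n : ℚ) - ((x-1 : ℕ) : ℚ)) * hyperPMF M n N (x-1))
        - ((n : ℚ) - x) * hyperPMF M n N x := by
  have hc : ((N.choose n : ℕ) : ℚ) ≠ 0 := by
    exact_mod_cast (Nat.choose_pos hnN).ne'
  have hNM : ((N - M : ℕ) : ℚ) = (N : ℚ) - M := Nat.cast_sub hMN.le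
  have hsub : N - (M+1) = (N - M) - 1 := by omega
  cases x with
  | zero =>
      simp only [hyperPMF, if_pos (Nat.zero_le n), Nat.choose_zero_right, Nat.sub_zero,
        if_true, Nat.cast_one, one_mul, Nat.cast_zero]
      rw [hsub]
      have hA := factA (N - M) n
      rw [hNM] at hA
      have hn' : ((n - 0 : ℕ) : ℚ) = (n : ℚ) := by norm_num
      field_simp
      linear_combination hA
  | succ y =>
      have hy : y ≤ n := by omega
      have hy1 : y + 1 ≤ n := hx
      simp only [hyperPMF, if_pos hy1, if_pos hy, Nat.succ_sub_one, Nat.succ_ne_zero,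
        if_false]
      rw [hsub]
      -- facts
      have hA := factA (N - M) (n - (y+1))
      have hB := factB (N - M) (n - (y+1))
      have hk : ((n - (y+1) : ℕ) : ℚ) = (n : ℚ) - y - 1 := by
        rw [Nat.cast_sub hy1]; push_cast; ring
      have hsucc : n - (y+1) + 1 = n - y := by omega
      rw [hNM, hk] at hA hB
      rw [hsucc] at hB
      have hP : ((M+1).choose (y+1) : ℚ) = (M.choose y : ℚ) + (M.choose (y+1) : ℚ) := by
        exact_mod_cast congrArg (Nat.cast : ℕ → ℚ) (Nat.choose_succ_succ (M) (y))
      set p := (M.choose y : ℚ)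
      set q := (M.choose (y+1) : ℚ)
      set r := ((N-M).choose (n-y) : ℚ)
      set s := ((N-M).choose (n-(y+1)) : ℚ)
      set t := ((N-M-1).choose (n-(y+1)) : ℚ)
      set c := (N.choose n : ℚ)
      have hnum : ((N:ℚ) - M) * (((M+1).choose (y+1) : ℚ) * t - q * s)
          = ((n:ℚ) - y) * (p * r) - ((n:ℚ) - y - 1) * (q * s) := by
        linear_combination (p + q) * hA - p * hB + (((N:ℚ) - M) * t) * hP
      calc ((N:ℚ) - M) * (((M+1).choose (y+1) : ℚ) * t / c - q * s / c)
          = (((N:ℚ) - M) * (((M+1).choose (y+1) : ℚ) * t - q * s)) / c := by ring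
        _ = (((n:ℚ) - y) * (p * r) - ((n:ℚ) - y - 1) * (q * s)) / c := by rw [hnum]
        _ = ((n:ℚ) - ↑y) * (p * r / c) - ((n:ℚ) - ↑(y+1)) * (q * s / c) := by
            push_cast; ring

theorem hyperPMF_interval_diff (n N M a b : ℕ) (hn : 0 < n) (hnN : n ≤ N)
    (hab : a ≤ b) (hbn : b ≤ n) (hlen : b - a < n) (hMN : M < N) :
    ((N : ℚ) - M) *
        ((∑ x ∈ Finset.Icc a b, hyperPMF (M + 1) n N x)
          - ∑ x ∈ Finset.Icc a b, hyperPMF M n N x)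
      = ((n : ℚ) - ((a : ℚ) - 1)) * (if a = 0 then 0 else hyperPMF M n N (a - 1))
          - ((n : ℚ) - b) * hyperPMF M n N b := by
  set g : ℕ → ℚ := fun x =>
    if x = 0 then 0 else ((n : ℚ) - ((x-1 : ℕ) : ℚ)) * hyperPMF M n N (x-1) with hg
  have hsum : ((N : ℚ) - M) *
        ((∑ x ∈ Finset.Icc a b, hyperPMF (M + 1) n N x)
          - ∑ x ∈ Finset.Icc a b, hyperPMF M n N x)
      = ∑ x ∈ Finset.Icc a b, (g x - g (x+1)) := by
    rw [← Finset.sum_sub_distrib, Finset.mul_sum]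
    refine Finset.sum_congr rfl fun x hxm => ?_
    have hx : x ≤ n := le_trans (Finset.mem_Icc.mp hxm).2 hbn
    have := key n N M hnN hMN x hx
    simp only [hg]
    simp only [Nat.succ_ne_zero, if_false, Nat.add_sub_cancel]
    convert this using 2
  rw [hsum, tele g a b hab]
  have hgb : g (b+1) = ((n : ℚ) - b) * hyperPMF M n N b := by
    simp [hg]
  rw [hgb]
  congr 1
  by_cases ha : a = 0
  · simp [hg, ha]
  · simp only [hg, if_neg ha]
    rw [Nat.cast_sub (by omega : 1 ≤ a), Nat.cast_one]
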